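/- Let k, n ∈ ℕ with n ≥ 1, let ζ ∈ ℂ be a primitive n-th root of unity, and let ℓ ∈ ℤ. Then the eigenspace {v : I_k → ℂ | D(k,ζ).mulVec v = ζ^ℓ • v} has ℂ-dimension Σ_{0 ≤ b ≤ k, (k : ℤ) − 2b ≡ ℓ (mod n)} C(k,b), where ζ^ℓ is an integer power and the congruence is in ℤ. -/

import Mathlib

open Matrix

/-- The number of `-1` factors (encoded as `true`) in a simple tensor index. -/
def wt {k : ℕ} (r : Fin k → Bool) : ℕ := (Finset.univ.filter fun i => r i = true).card

/-- The matrix of `g^{⊗k}` on `V^{⊗k}` for `g = diag(ζ⁻¹, ζ)`. -/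
noncomputable def Dmat (k : ℕ) (ζ : ℂ) : Matrix (Fin k → Bool) (Fin k → Bool) ℂ :=
  Matrix.diagonal fun r => ζ ^ ((k : ℤ) - 2 * (wt r : ℤ))

/-- The eigenspace `{v | M.mulVec v = μ • v}` as a submodule of `I → ℂ`. -/
noncomputable def eigSub {I : Type*} [Fintype I] (M : Matrix I I ℂ) (μ : ℂ) :
    Submodule ℂ (I → ℂ) where
  carrier := {v | M.mulVec v = μ • v}
  add_mem' := by
    intro a b ha hb
    simp only [Set.mem_setOf_eq] at *
    rw [Matrix.mulVec_add, ha, hb, smul_add]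
  zero_mem' := by
    simp only [Set.mem_setOf_eq, Matrix.mulVec_zero, smul_zero]
  smul_mem' := by
    intro c v hv
    simp only [Set.mem_setOf_eq] at *
    rw [Matrix.mulVec_smul, hv, smul_comm]


lemma mem_eigSub_diag {I : Type*} [Fintype I] [DecidableEq I] (d : I → ℂ) (μ : ℂ) (v : I → ℂ) :
    v ∈ eigSub (Matrix.diagonal d) μ ↔ ∀ r, d r ≠ μ → v r = 0 := by
  show (Matrix.diagonal d).mulVec v = μ • v ↔ _
  constructor
  · intro h r hr
    have := congrFun h r
    simp only [Matrix.mulVec_diagonal, Pi.smul_apply, smul_eq_mul] at this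
    by_contra hv
    exact hr (mul_right_cancel₀ hv this)
  · intro h
    funext r
    simp only [Matrix.mulVec_diagonal, Pi.smul_apply, smul_eq_mul]
    by_cases hr : d r = μ
    · rw [hr]
    · rw [h r hr, mul_zero, mul_zero]

noncomputable def eigEquiv {I : Type*} [Fintype I] [DecidableEq I] (d : I → ℂ) (μ : ℂ) :
    eigSub (Matrix.diagonal d) μ ≃ₗ[ℂ] ({r : I // d r = μ} → ℂ) where
  toFun v := fun s => v.1 s.1
  map_add' _ _ := rfl
  map_smul' _ _ := rfl
  invFun w := ⟨fun r => if h : d r = μ then w ⟨r, h⟩ else 0, by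
    rw [mem_eigSub_diag]; intro r hr; simp [hr]⟩
  left_inv v := by
    ext r
    by_cases h : d r = μ
    · simp [h]
    · simp only [h, dif_neg, not_false_iff]
      exact ((mem_eigSub_diag d μ v.1).mp v.2 r h).symm
  right_inv w := by ext s; simp [s.2]

lemma finrank_eigSub_diag {I : Type*} [Fintype I] [DecidableEq I] (d : I → ℂ) (μ : ℂ) :
    Module.finrank ℂ (eigSub (Matrix.diagonal d) μ) =
      (Finset.univ.filter fun r => d r = μ).card := by
  rw [(eigEquiv d μ).finrank_eq]
  rw [Module.finrank_pi, Fintype.card_subtype]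

def boolEquiv (k : ℕ) : (Fin k → Bool) ≃ Finset (Fin k) where
  toFun r := Finset.univ.filter fun i => r i = true
  invFun s := fun i => i ∈ s
  left_inv r := by funext i; simp
  right_inv s := by ext i; simp

lemma card_wt (k b : ℕ) :
    (Finset.univ.filter fun r : Fin k → Bool => wt r = b).card = k.choose b := by
  have h1 : (Finset.univ.filter fun r : Fin k → Bool => wt r = b).card
      = Fintype.card {r : Fin k → Bool // wt r = b} := (Fintype.card_subtype _).symm
  rw [h1]
  have e : {r : Fin k → Bool // wt r = b} ≃ {s : Finset (Fin k) // s.card = b} :=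
    (Equiv.subtypeEquiv (boolEquiv k) (fun r => Iff.rfl))
  rw [Fintype.card_congr e, Fintype.card_finset_len, Fintype.card_fin]

lemma count_main (k : ℕ) (P : ℕ → Prop) [DecidablePred P] :
    (Finset.univ.filter fun r : Fin k → Bool => P (wt r)).card
      = ∑ b ∈ Finset.range (k + 1), if P b then k.choose b else 0 := by
  have hwt : ∀ r : Fin k → Bool, wt r ≤ k := fun r => by
    simpa [wt] using (Finset.card_filter_le Finset.univ fun i => r i = true)
  rw [Finset.card_eq_sum_card_fiberwise (f := wt) (t := Finset.range (k + 1))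
    (fun r _ => Finset.mem_range.mpr (Nat.lt_succ_of_le (hwt r)))]
  refine Finset.sum_congr rfl fun b _ => ?_
  rw [Finset.filter_filter]
  by_cases hb : P b
  · rw [if_pos hb, ← card_wt k b]
    congr 1
    apply Finset.filter_congr
    intro r _
    constructor
    · intro h; exact h.2
    · intro h; exact ⟨h ▸ hb, h⟩
  · rw [if_neg hb, Finset.card_eq_zero]
    apply Finset.filter_eq_empty_iff.mpr
    intro r _ h
    exact hb (h.2 ▸ h.1)

lemma zpow_eq_iff (n : ℕ) (hn : 1 ≤ n) (ζ : ℂ) (hζ : IsPrimitiveRoot ζ n) (a ℓ : ℤ) :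
    ζ ^ a = ζ ^ ℓ ↔ a ≡ ℓ [ZMOD (n : ℤ)] := by
  have h0 : ζ ≠ 0 := hζ.ne_zero (Nat.one_le_iff_ne_zero.mp hn)
  rw [← sub_eq_zero]
  rw [show ζ ^ a - ζ ^ ℓ = ζ ^ ℓ * (ζ ^ (a - ℓ) - 1) by
    rw [mul_sub, mul_one, ← zpow_add₀ h0]; ring_nf]
  rw [mul_eq_zero, sub_eq_zero]
  simp only [zpow_ne_zero _ h0, false_or]
  rw [hζ.zpow_eq_one_iff_dvd]
  rw [Int.modEq_iff_dvd]; exact dvd_sub_comm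

theorem stmt4 (k n : ℕ) (hn : 1 ≤ n) (ζ : ℂ) (hζ : IsPrimitiveRoot ζ n) (ℓ : ℤ) :
    Module.finrank ℂ (eigSub (Dmat k ζ) (ζ ^ ℓ)) =
      ∑ b ∈ Finset.range (k + 1),
        if ((k : ℤ) - 2 * (b : ℤ)) ≡ ℓ [ZMOD (n : ℤ)] then k.choose b else 0 := by
  rw [Dmat, finrank_eigSub_diag]
  rw [Finset.filter_congr (q := fun r : Fin k → Bool =>
      ((k : ℤ) - 2 * (wt r : ℤ)) ≡ ℓ [ZMOD (n : ℤ)])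
    (fun r _ => zpow_eq_iff n hn ζ hζ _ ℓ)]
  exact count_main k (fun b => ((k : ℤ) - 2 * (b : ℤ)) ≡ ℓ [ZMOD (n : ℤ)])
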